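/- If agent 2 already has, before the announcement of an explanation E, ground justifying terms for every hypothesis of E and for every deduction step of E such that all derived terms of E are already in agent 2's evidence sets (agent 2 is already aware of E), then the learning update is trivial: M|(2,w,E) has the same evidence function for agent 2 at w as M, hence M,w ⊨ φ ↔ [2:E]φ for all formulas φ of the language. -/

import Mathlib

open Classical

/-- Propositional formulas. -/
inductive PropForm : Type
  | atom : ℕ → PropForm
  | fls : PropForm
  | imp : PropForm → PropForm → PropForm
  deriving DecidableEq

/-- Justification terms: constants, variables (indexed by a formula and a list
of formulas), and application. -/
inductive Tm : Type
  | const : ℕ → Tm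
  | var : PropForm → List PropForm → Tm
  | app : Tm → Tm → Tm
  deriving DecidableEq

/-- Ground terms: terms without variables. -/
def Tm.Ground : Tm → Prop
  | .const _ => True
  | .var _ _ => False
  | .app s t => s.Ground ∧ t.Ground

/-- Subterm relation. -/
def Tm.Subterm (s : Tm) : Tm → Prop
  | .app a b => s = Tm.app a b ∨ s.Subterm a ∨ s.Subterm b
  | t => s = t

/-- Substitution of a term for a justification variable. -/
def Tm.subst (x : PropForm × List PropForm) (r : Tm) : Tm → Tm
  | .const n => .const n
  | .var F L => if (F, L) = x then r else .var F L
  | .app a b => .app (Tm.subst x r a) (Tm.subst x r b)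

/-- `bigImp [A1,…,An] B = A1 → (… → (An → B)…)`. -/
def bigImp (L : List PropForm) (B : PropForm) : PropForm := L.foldr PropForm.imp B

/-- Formulas of the full language 𝓛J. -/
inductive JForm : Type
  | atom : ℕ → JForm
  | fls : JForm
  | imp : JForm → JForm → JForm
  | box : Fin 2 → JForm → JForm
  | just : Fin 2 → Tm → PropForm → JForm

/-- Embedding of propositional formulas into 𝓛J. -/
def PropForm.toJ : PropForm → JForm
  | .atom n => .atom n
  | .fls => .fls
  | .imp A B => .imp A.toJ B.toJ

/-- A multi-agent frame: agents 0 (explainer, "agent 1") and 1 (explainee,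
"agent 2"), worlds, reflexive transitive accessibility relations, evidence
functions, and a valuation. -/
structure Frame where
  W : Type
  ne : Nonempty W
  R : Fin 2 → W → W → Prop
  refl : ∀ i, Reflexive (R i)
  trans : ∀ i, Transitive (R i)
  star : Fin 2 → Tm → W → Set PropForm
  val : ℕ → Set W

/-- Truth of propositional formulas. -/
def Frame.psat (M : Frame) : M.W → PropForm → Prop := fun w F =>
  match F with
  | .atom n => w ∈ M.val n
  | .fls => False
  | .imp A B => M.psat w A → M.psat w B

/-- Truth for the full language. -/
def Frame.sat (M : Frame) : M.W → JForm → Prop := fun w φ =>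
  match φ with
  | .atom n => w ∈ M.val n
  | .fls => False
  | .imp A B => M.sat w A → M.sat w B
  | .box i A => ∀ u, M.R i w u → M.sat u A
  | .just i t F => F ∈ M.star i t w

/-- Justification yields belief (for ground terms). -/
def Frame.JYB (M : Frame) : Prop :=
  ∀ i (t : Tm) w F, t.Ground → F ∈ M.star i t w → ∀ u, M.R i w u → M.psat u F

/-- Finiteness constraints on evidence functions. -/
def Frame.FinEv (M : Frame) : Prop :=
  (∀ i w, {t : Tm | t.Ground ∧ (M.star i t w).Nonempty}.Finite) ∧
  (∀ i (t : Tm) w, t.Ground → (M.star i t w).Finite)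

/-- Multi-agent modular models. -/
def Frame.Modular (M : Frame) : Prop := M.JYB ∧ M.FinEv

/-- Explanations: finite trees of propositional formulas. `node cs B` has
claim `B`; it is a hypothesis (leaf) if `cs = []` and a derived formula
otherwise. -/
inductive Expl : Type
  | node : List Expl → PropForm → Expl

def Expl.claim : Expl → PropForm
  | .node _ B => B

def Expl.children : Expl → List Expl
  | .node cs _ => cs

/-- Hypotheses (leaves) of an explanation. -/
def Expl.hyps : Expl → List PropForm
  | .node [] B => [B]
  | .node (c :: cs) _ => ((c :: cs).attach).flatMap (fun x => x.1.hyps)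
decreasing_by
  have := List.sizeOf_lt_of_mem x.2
  simp only [Expl.node.sizeOf_spec] at *
  omega

/-- Deduction steps of an explanation: pairs (premises, derived formula). -/
def Expl.steps : Expl → List (List PropForm × PropForm)
  | .node [] _ => []
  | .node (c :: cs) B =>
      ((c :: cs).map Expl.claim, B) :: ((c :: cs).attach).flatMap (fun x => x.1.steps)
decreasing_by
  have := List.sizeOf_lt_of_mem x.2
  simp only [Expl.node.sizeOf_spec] at *
  omega

/-- All subtrees of an explanation (including itself). -/
def Expl.subtrees : Expl → List Expl
  | .node cs B => .node cs B :: (cs.attach).flatMap (fun x => x.1.subtrees)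
decreasing_by
  have := List.sizeOf_lt_of_mem x.2
  simp only [Expl.node.sizeOf_spec] at *
  omega

/-- Set of derived formulas of an explanation. -/
def Expl.dset (E : Expl) : Set PropForm := {G | ∃ L, (L, G) ∈ E.steps}

/-- `DTerm M i w E t`: `t` is a derived term of `claim E` with respect to the
explanation `E`, constructed by agent `i` at world `w`.  For a hypothesis the
"derived term" is a ground justifying term if one exists, and the variable
`x_A` otherwise; for a derived formula it is `d·t₁⋯tₙ` if the agent has a
ground justification `d` of the deduction step, and the variable
`x_B^{Pr(E,B)}` otherwise. -/
inductive DTerm (M : Frame) (i : Fin 2) (w : M.W) : Expl → Tm → Prop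
  | hyp_just {A : PropForm} {t : Tm} :
      t.Ground → A ∈ M.star i t w → DTerm M i w (.node [] A) t
  | hyp_var {A : PropForm} :
      (¬ ∃ t : Tm, t.Ground ∧ A ∈ M.star i t w) →
      DTerm M i w (.node [] A) (.var A [])
  | step {cs : List Expl} {B : PropForm} {d : Tm} {ts : List Tm}
      (hne : cs ≠ []) (hd : d.Ground)
      (hj : bigImp (cs.map Expl.claim) B ∈ M.star i d w)
      (hlen : ts.length = cs.length)
      (hts : List.Forall₂ (DTerm M i w) cs ts) :
      DTerm M i w (.node cs B) (ts.foldl Tm.app d)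
  | step_var {cs : List Expl} {B : PropForm} (hne : cs ≠ [])
      (h : ¬ ∃ d : Tm, d.Ground ∧ bigImp (cs.map Expl.claim) B ∈ M.star i d w) :
      DTerm M i w (.node cs B) (.var B (cs.map Expl.claim))

/-- Agent 2 understands `E` at `w` iff its derived term of `claim E` w.r.t.
`E` is ground. -/
def Understands (M : Frame) (w : M.W) (E : Expl) : Prop :=
  ∃ t : Tm, DTerm M 1 w E t ∧ t.Ground

/-- The updated evidence function of agent 2 after learning from explanation
`E` at `w0`, where `Dts` records the derived term of each derived formula of
`E` and `r` is the derived term of `claim E`. -/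
noncomputable def learnStar (M : Frame) (w0 : M.W) (E : Expl)
    (Dts : List (PropForm × Tm)) (r : Tm) : Fin 2 → Tm → M.W → Set PropForm :=
  fun i t w =>
    if i = 1 ∧ w = w0 then
      M.star i t w ∪ {F | (F, t) ∈ Dts} ∪
        {G | ∃ s : Tm, G ∈ M.star i s w ∧
          (t = Tm.subst (E.claim, []) r s ∨ t = Tm.subst (E.claim, E.hyps) r s)}
    else M.star i t w

/-- The model `M|(2, w0, E)` after agent 2 learns from explanation `E`. -/
noncomputable def learnModel (M : Frame) (w0 : M.W) (E : Expl)
    (Dts : List (PropForm × Tm)) (r : Tm) : Frame :=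
  { M with star := learnStar M w0 E Dts r }

/-- `Dts` and `r` are genuine derived-term data for `E`: every entry of `Dts`
is a derived term of a derived formula of `E`, every derived formula of `E`
has its derived term recorded in `Dts`, `r` is a derived term of `claim E`
w.r.t. `E`, and (when `E` is not a single hypothesis) `r` is the recorded
derived term of `claim E`. -/
def GoodDerived (M : Frame) (w : M.W) (E : Expl)
    (Dts : List (PropForm × Tm)) (r : Tm) : Prop :=
  DTerm M 1 w E r ∧
  (∀ p ∈ Dts, ∃ sub ∈ E.subtrees, sub.children ≠ [] ∧ sub.claim = p.1 ∧
      DTerm M 1 w sub p.2) ∧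
  (∀ sub ∈ E.subtrees, sub.children ≠ [] →
      ∃ t : Tm, (sub.claim, t) ∈ Dts ∧ DTerm M 1 w sub t) ∧
  (E.children ≠ [] → (E.claim, r) ∈ Dts)

/-- Restriction of a model to a set of worlds (update by a set of worlds). -/
def Frame.restrict (M : Frame) (X : Set M.W) (hne : X.Nonempty) : Frame where
  W := X
  ne := hne.to_subtype
  R i u v := M.R i u.1 v.1
  refl i u := M.refl i u.1
  trans i _ _ _ h1 h2 := M.trans i h1 h2
  star i t u := M.star i t u.1
  val n := {u | u.1 ∈ M.val n}

/-- The feedback value of agent 2 on a node of an explanation: a hypothesis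
gets value 1 iff agent 2 can justify it by a ground term; a derived formula
gets value 1 iff agent 2 understands the subexplanation rooted at it. -/
def FVal (M : Frame) (w : M.W) : Expl → Prop
  | .node [] A => ∃ t : Tm, t.Ground ∧ A ∈ M.star 1 t w
  | .node (c :: cs) B => Understands M w (.node (c :: cs) B)

/-- The truth set by which agent 1 updates upon receiving agent 2's feedback
on the node `sub` of an explanation. -/
noncomputable def Uset (M : Frame) (w : M.W) : Expl → Set M.W
  | .node [] A =>
      if FVal M w (.node [] A) then {u | ∃ t : Tm, t.Ground ∧ A ∈ M.star 1 t u}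
      else {u | ¬ ∃ t : Tm, t.Ground ∧ A ∈ M.star 1 t u}
  | .node (c :: cs) B =>
      if FVal M w (.node (c :: cs) B) then
        {u | ∃ t : Tm, t.Ground ∧ bigImp ((c :: cs).map Expl.claim) B ∈ M.star 1 t u}
      else if ∀ c' ∈ c :: cs, FVal M w c' then
        {u | ¬ ∃ t : Tm, t.Ground ∧ bigImp ((c :: cs).map Expl.claim) B ∈ M.star 1 t u}
      else Set.univ

/-- The combined truth set of the series of updates by agent 2's feedback on
all nodes of explanation `E`. -/
noncomputable def FeedbackSet (M : Frame) (w : M.W) (E : Expl) : Set M.W :=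
  {u | ∀ sub ∈ E.subtrees, u ∈ Uset M w sub}

/-- Agent 1 is not sure whether agent 2 can justify `F`:  ¬□₁△₂F. -/
def NotSure (M : Frame) (w : M.W) (F : PropForm) : Prop :=
  ¬ ∀ u, M.R 0 w u → ∃ t : Tm, t.Ground ∧ F ∈ M.star 1 t u

/-- `N(E)`: the hypotheses and deduction steps of `E` that agent 1 is not
sure agent 2 can justify. -/
def Nset (M : Frame) (w : M.W) (E : Expl) : Set PropForm :=
  {F | (F ∈ E.hyps ∧ NotSure M w F) ∨
       ∃ p ∈ E.steps, p.2 = F ∧ NotSure M w (bigImp p.1 p.2)}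

/-- The preference relation over explanations: `Pref M w E E'` means
`E ≾ E'` (`E'` is at least as preferred as `E`). -/
def Pref (M : Frame) (w : M.W) (E E' : Expl) : Prop :=
  (Nset M w E).ncard > (Nset M w E').ncard ∨
  ((Nset M w E).ncard = (Nset M w E').ncard ∧ E.dset.ncard ≥ E'.dset.ncard)

/-- `E` is available for agent 1 (index 0) to agent 2 (index 1) at `w`. -/
def Available (M : Frame) (w : M.W) (E : Expl) : Prop :=
  (∀ A ∈ E.hyps, ∃ t : Tm, t.Ground ∧ A ∈ M.star 0 t w) ∧
  (∀ sub ∈ E.subtrees, sub.children ≠ [] →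
      ∃ s : Tm, s.Ground ∧ DTerm M 0 w sub s ∧ sub.claim ∈ M.star 0 s w) ∧
  (∀ A ∈ E.hyps, ¬ ∀ u, M.R 0 w u → ¬ ∃ t : Tm, t.Ground ∧ A ∈ M.star 1 t u) ∧
  (∀ p ∈ E.steps,
      ¬ ∀ u, M.R 0 w u → ¬ ∃ t : Tm, t.Ground ∧ bigImp p.1 p.2 ∈ M.star 1 t u)

/-- `λ(A, F)`: available explanations proving `F` from hypotheses `A`. -/
def lam (M : Frame) (w : M.W) (A : List PropForm) (F : PropForm) : Set Expl :=
  {E | E.claim = F ∧ (A ≠ [] → ∀ x, x ∈ E.hyps ↔ x ∈ A) ∧ Available M w E}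

/-- `why(𝓕(E))`: the nodes of `E` with feedback value 0 all of whose
premises have feedback value 1. -/
def whySet (M : Frame) (w : M.W) (E : Expl) : Set Expl :=
  {sub | sub ∈ E.subtrees ∧ ¬ FVal M w sub ∧ ∀ c ∈ sub.children, FVal M w c}

/-- The candidate explanations after feedback on `prev`: available
explanations for the initial claim `F` together with available explanations
for the formulas agent 2 asked about. -/
def Cands (M : Frame) (w : M.W) (F : PropForm) (prev : Expl) : Set Expl :=
  lam M w [] F ∪
    {E' | ∃ sub ∈ whySet M w prev,
        E' ∈ lam M w (sub.children.map Expl.claim) sub.claim}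

/-- Most preferred explanations in a set of candidates. -/
def MostPref (M : Frame) (w : M.W) (X : Set Expl) (E : Expl) : Prop :=
  E ∈ X ∧ ∀ E' ∈ X, Pref M w E' E

/-- A state of the conversation: a model together with the actual world. -/
abbrev ConvState := Σ N : Frame, N.W

/-- Agent 2 learns from explanation `E` (an update of the model). -/
def ExplStep (p q : ConvState) (E : Expl) : Prop :=
  ∃ (Dts : List (PropForm × Tm)) (r : Tm),
    GoodDerived p.1 p.2 E Dts r ∧ q = ⟨learnModel p.1 p.2 E Dts r, p.2⟩

/-- Agent 1 learns from agent 2's (truthful) feedback on `E`. -/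
def FbStep (p q : ConvState) (E : Expl) : Prop :=
  ∃ hw : p.2 ∈ FeedbackSet p.1 p.2 E,
    q = ⟨p.1.restrict (FeedbackSet p.1 p.2 E) ⟨p.2, hw⟩, ⟨p.2, hw⟩⟩

/-- One round of the conversation: an explanation followed by feedback. -/
def RoundStep (p q : ConvState) (E : Expl) : Prop :=
  ∃ mid : ConvState, ExplStep p mid E ∧ FbStep mid q E

/-- If agent 2 is already aware of `E` (every derived formula is
already in the evidence set of its derived term, and agent 2's evidence
function contains no occurrences of the variables `x_{claim E}` and
`x_{claim E}^{H(E)}`), then the learning update is trivial: agent 2's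
evidence function at `w` is unchanged, hence `M,w ⊨ φ ↔ [2:E]φ` for every
formula `φ` of the language. -/
lemma subst_eq_of_not_subterm (F : PropForm) (L : List PropForm) (r : Tm) :
    ∀ s : Tm, ¬ Tm.Subterm (.var F L) s → Tm.subst (F, L) r s = s := by
  intro s
  induction s with
  | const n => intro _; rfl
  | var F' L' =>
      intro h
      simp only [Tm.subst]
      rw [if_neg]
      intro he
      apply h
      simp only [Tm.Subterm]
      cases he
      rfl
  | app a b iha ihb =>
      intro h
      simp only [Tm.Subterm, not_or] at h
      simp only [Tm.subst, iha h.2.1, ihb h.2.2]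

theorem learn_trivial_of_aware (M : Frame) (w : M.W) (E : Expl)
    (Dts : List (PropForm × Tm)) (r : Tm)
    (h : GoodDerived M w E Dts r)
    (haware : ∀ p ∈ Dts, p.1 ∈ M.star 1 p.2 w)
    (hnovar : ∀ (s : Tm) (G : PropForm), G ∈ M.star 1 s w →
      ¬ Tm.Subterm (.var E.claim []) s ∧ ¬ Tm.Subterm (.var E.claim E.hyps) s) :
    (∀ (t : Tm), (learnModel M w E Dts r).star 1 t w = M.star 1 t w) ∧
    (∀ φ : JForm, M.sat w φ ↔ (learnModel M w E Dts r).sat w φ) := by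
  have hstar : (learnModel M w E Dts r).star = M.star := by
    funext i t w'
    show learnStar M w E Dts r i t w' = M.star i t w'
    unfold learnStar
    by_cases hc : i = 1 ∧ w' = w
    · refine (if_pos hc).trans ?_
      rw [hc.1, hc.2]
      have hX : {F | (F, t) ∈ Dts} ⊆ M.star 1 t w := by
        intro F hF; exact haware (F, t) hF
      have hY : {G | ∃ s : Tm, G ∈ M.star 1 s w ∧
          (t = Tm.subst (E.claim, []) r s ∨ t = Tm.subst (E.claim, E.hyps) r s)} ⊆
          M.star 1 t w := by
        rintro G ⟨s, hGs, hts⟩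
        have hnv := hnovar s G hGs
        rcases hts with h1 | h1
        · rw [subst_eq_of_not_subterm _ _ _ _ hnv.1] at h1
          rw [h1]; exact hGs
        · rw [subst_eq_of_not_subterm _ _ _ _ hnv.2] at h1
          rw [h1]; exact hGs
      rw [Set.union_eq_left.mpr hX, Set.union_eq_left.mpr hY]
    · exact if_neg hc
  constructor
  · intro t; rw [hstar]
  · have key : ∀ (φ : JForm) (w' : M.W),
        M.sat w' φ ↔ (learnModel M w E Dts r).sat w' φ := by
      intro φ
      induction φ with
      | atom n => intro w'; exact Iff.rfl
      | fls => intro w'; exact Iff.rfl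
      | imp A B ihA ihB =>
          intro w'
          show (M.sat w' A → M.sat w' B) ↔ _
          rw [ihA, ihB]
          exact Iff.rfl
      | box i A ihA =>
          intro w'
          show (∀ u, M.R i w' u → M.sat u A) ↔
            (∀ u, M.R i w' u → (learnModel M w E Dts r).sat u A)
          exact forall_congr' fun u => imp_congr Iff.rfl (ihA u)
      | just i t F =>
          intro w'
          show F ∈ M.star i t w' ↔ F ∈ (learnModel M w E Dts r).star i t w'
          rw [hstar]
    exact fun φ => key φ w
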